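/- Fix ρ > 1, a real number γ > 1, and n ∈ ℕ. Let F_ρ := { (ρe^{iθ} + ρ^{−1}e^{−iθ})/(ρ + ρ^{−1}) : θ ∈ [0, 2π] } be the ellipse with vertices ±1 and co-vertices ±i(ρ−ρ^{−1})/(ρ+ρ^{−1}), set w := γ·(ρ + ρ^{−1})/2 and s := w + √(w² − 1) (a real number greater than 1). Then: (a) every complex polynomial P of degree at most n with |P(z)| ≤ 1 for all z ∈ F_ρ satisfies |P(γ)| ≤ s^n/ρ^n; (b) there exists a complex polynomial P of degree at most n with |P(z)| ≤ 1 for all z ∈ F_ρ and |P(γ)| ≥ (s^n + s^{−n})/(ρ^n + ρ^{−n}). -/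

import Mathlib

open Polynomial in
lemma aux_rev (P : Polynomial ℂ) (n : ℕ) (hP : P.natDegree ≤ n) (r : ℂ) :
    ∃ Q : Polynomial ℂ, Q.natDegree ≤ n ∧ ∀ ζ : ℂ, ζ ≠ 0 →
      Q.eval ζ = ζ ^ n * P.eval (r / ζ) := by
  refine ⟨∑ k ∈ Finset.range (n + 1), C (P.coeff k * r ^ k) * X ^ (n - k), ?_, ?_⟩
  · refine Polynomial.natDegree_sum_le_of_forall_le _ _ fun k hk => ?_
    exact (Polynomial.natDegree_C_mul_X_pow_le _ _).trans (Nat.sub_le n k)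
  · intro ζ hζ
    rw [Polynomial.eval_finset_sum,
      Polynomial.eval_eq_sum_range' (lt_of_le_of_lt hP (Nat.lt_succ_self n)), Finset.mul_sum]
    refine Finset.sum_congr rfl fun k hk => ?_
    have hk' : k ≤ n := Nat.lt_succ_iff.mp (Finset.mem_range.mp hk)
    have hzn : ζ ^ (n - k) * ζ ^ k = ζ ^ n := by rw [← pow_add, Nat.sub_add_cancel hk']
    simp only [Polynomial.eval_mul, Polynomial.eval_C, Polynomial.eval_pow, Polynomial.eval_X,
      div_pow]
    field_simp
    linear_combination (P.coeff k * r ^ k) * hzn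

open Polynomial in
lemma aux_g (P : Polynomial ℂ) (n : ℕ) (hP : P.natDegree ≤ n) (c : ℂ) (hc : c ≠ 0) :
    ∃ g : Polynomial ℂ, g.natDegree ≤ 2 * n ∧ ∀ ζ : ℂ, ζ ≠ 0 →
      g.eval ζ = ζ ^ n * P.eval ((ζ ^ 2 + 1) / (c * ζ)) := by
  refine ⟨∑ k ∈ Finset.range (n + 1), C (P.coeff k * c⁻¹ ^ k) * ((X ^ 2 + 1) ^ k * X ^ (n - k)),
    ?_, ?_⟩
  · refine Polynomial.natDegree_sum_le_of_forall_le _ _ fun k hk => ?_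
    have hk' : k ≤ n := Nat.lt_succ_iff.mp (Finset.mem_range.mp hk)
    refine (Polynomial.natDegree_mul_le).trans ?_
    have h1 : (C (P.coeff k * c⁻¹ ^ k)).natDegree = 0 := Polynomial.natDegree_C _
    have hd2 : (X ^ 2 + 1 : ℂ[X]).natDegree ≤ 2 := by
      refine (Polynomial.natDegree_add_le _ _).trans ?_
      simp
    have hXk : ((X ^ 2 + 1 : ℂ[X]) ^ k).natDegree ≤ 2 * k :=
      (Polynomial.natDegree_pow_le).trans (by nlinarith)
    have h2 : ((X ^ 2 + 1 : ℂ[X]) ^ k * X ^ (n - k)).natDegree ≤ 2 * k + (n - k) := by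
      refine (Polynomial.natDegree_mul_le).trans ?_
      have := Polynomial.natDegree_X_pow_le (R := ℂ) (n - k)
      omega
    omega
  · intro ζ hζ
    rw [Polynomial.eval_finset_sum,
      Polynomial.eval_eq_sum_range' (lt_of_le_of_lt hP (Nat.lt_succ_self n)), Finset.mul_sum]
    refine Finset.sum_congr rfl fun k hk => ?_
    have hk' : k ≤ n := Nat.lt_succ_iff.mp (Finset.mem_range.mp hk)
    have hzn : ζ ^ (n - k) * ζ ^ k = ζ ^ n := by rw [← pow_add, Nat.sub_add_cancel hk']
    simp only [Polynomial.eval_mul, Polynomial.eval_C, Polynomial.eval_pow, Polynomial.eval_X,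
      Polynomial.eval_add, Polynomial.eval_one, div_pow, mul_pow]
    field_simp
    have hcc : c ^ k * c⁻¹ ^ k = 1 := by rw [← mul_pow, mul_inv_cancel₀ hc, one_pow]
    linear_combination (P.coeff k * (1 + ζ ^ 2) ^ k) * hzn + (P.coeff k * ζ ^ k * ζ ^ (n - k) * (1 + ζ ^ 2) ^ k) * hcc

open Polynomial Complex in
lemma aux_degT (n : ℕ) : (Polynomial.Chebyshev.T ℂ n).natDegree ≤ n := by
  induction n using Nat.strong_induction_on with
  | _ n ih =>
    match n with
    | 0 => simp [Polynomial.Chebyshev.T_zero]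
    | 1 => simp [Polynomial.Chebyshev.T_one]
    | (k + 2) =>
      have h : ((k + 2 : ℕ) : ℤ) = (k : ℤ) + 2 := by push_cast; ring
      rw [h, Polynomial.Chebyshev.T_add_two]
      refine (Polynomial.natDegree_sub_le _ _).trans ?_
      have h1 : (2 * X * Polynomial.Chebyshev.T ℂ (k + 1) : ℂ[X]).natDegree ≤ k + 2 := by
        refine (Polynomial.natDegree_mul_le).trans ?_
        have h2 : (2 * X : ℂ[X]).natDegree ≤ 1 := by
          refine (Polynomial.natDegree_mul_le).trans ?_
          simp
        have h3 := ih (k + 1) (by omega)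
        push_cast at h3
        omega
      have h4 := ih k (by omega)
      omega

open Polynomial Complex in
lemma aux_chebEval (n : ℕ) (u : ℂ) (hu : u ≠ 0) :
    (Polynomial.Chebyshev.T ℂ n).eval ((u + u⁻¹) / 2) = (u ^ n + u⁻¹ ^ n) / 2 := by
  have h1 : (u + u⁻¹) / 2 = Complex.cos (-Complex.I * Complex.log u) := by
    rw [Complex.cos]
    rw [show -Complex.I * Complex.log u * Complex.I = Complex.log u by
      ring_nf; simp [Complex.I_sq]]
    rw [show -(-Complex.I * Complex.log u) * Complex.I = -Complex.log u by
      ring_nf; simp [Complex.I_sq]]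
    rw [Complex.exp_log hu, Complex.exp_neg, Complex.exp_log hu]
  rw [h1, Polynomial.Chebyshev.T_complex_cos]
  rw [Complex.cos]
  rw [show (n : ℤ) * (-Complex.I * Complex.log u) * Complex.I = (n : ℂ) * Complex.log u by
    push_cast; ring_nf; simp [Complex.I_sq]]
  rw [show (-((n : ℤ) * (-Complex.I * Complex.log u)) * Complex.I) = -((n:ℂ) * Complex.log u) by
    push_cast; ring_nf; simp [Complex.I_sq]]
  rw [Complex.exp_neg, Complex.exp_nat_mul, Complex.exp_log hu, ← inv_pow]

theorem stmt_15
    (ρ : ℝ) (hρ : 1 < ρ)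
    (γ : ℝ) (hγ : 1 < γ)
    (n : ℕ)
    (F : Set ℂ)
    (hF : F = (fun θ : ℝ =>
        ((ρ : ℂ) * Complex.exp (Complex.I * θ)
          + (ρ : ℂ)⁻¹ * Complex.exp (-(Complex.I * θ))) / ((ρ : ℂ) + (ρ : ℂ)⁻¹)) ''
        Set.Icc (0 : ℝ) (2 * Real.pi))
    (w s : ℝ)
    (hw : w = γ * (ρ + ρ⁻¹) / 2)
    (hs : s = w + Real.sqrt (w ^ 2 - 1)) :
    (∀ P : Polynomial ℂ, P.degree ≤ n → (∀ z ∈ F, ‖P.eval z‖ ≤ 1) →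
      ‖P.eval (γ : ℂ)‖ ≤ s ^ n / ρ ^ n) ∧
    (∃ P : Polynomial ℂ, P.degree ≤ n ∧ (∀ z ∈ F, ‖P.eval z‖ ≤ 1) ∧
      (s ^ (n : ℤ) + s ^ (-(n : ℤ))) / (ρ ^ (n : ℤ) + ρ ^ (-(n : ℤ)))
        ≤ ‖P.eval (γ : ℂ)‖) := by
  -- basic real facts
  have hρ0 : (0:ℝ) < ρ := by linarith
  have hρi : (0:ℝ) < ρ⁻¹ := inv_pos.2 hρ0
  have hρρ : ρ * ρ⁻¹ = 1 := mul_inv_cancel₀ (ne_of_gt hρ0)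
  have hc2 : 2 < ρ + ρ⁻¹ := by nlinarith [sq_nonneg (ρ - 1)]
  have hw1 : 1 < w := by rw [hw]; nlinarith
  have hd0 : (0:ℝ) ≤ w ^ 2 - 1 := by nlinarith
  have hdsq : (Real.sqrt (w ^ 2 - 1)) ^ 2 = w ^ 2 - 1 := Real.sq_sqrt hd0
  have hdnn : (0:ℝ) ≤ Real.sqrt (w ^ 2 - 1) := Real.sqrt_nonneg _
  have hs1 : 1 < s := by rw [hs]; nlinarith
  have hs0 : (0:ℝ) < s := by linarith
  have hsinv : s⁻¹ = w - Real.sqrt (w ^ 2 - 1) := by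
    refine inv_eq_of_mul_eq_one_right ?_
    rw [hs]; nlinarith
  have hss : s * s⁻¹ = 1 := mul_inv_cancel₀ (ne_of_gt hs0)
  have hssum : s + s⁻¹ = 2 * w := by rw [hsinv, hs]; ring
  have hγs : γ * (ρ + ρ⁻¹) = s + s⁻¹ := by rw [hssum, hw]; ring
  have hρs : ρ < s := by
    by_contra hcon
    push_neg at hcon
    have h1 : (0:ℝ) ≤ (ρ - s) * (s * ρ - 1) :=
      mul_nonneg (by linarith) (by nlinarith)
    have h2 : s + s⁻¹ ≤ ρ + ρ⁻¹ := by
      nlinarith [h1, mul_pos hs0 hρ0, hρρ, hss]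
    have h3 : ρ + ρ⁻¹ < γ * (ρ + ρ⁻¹) := by nlinarith
    linarith [hγs]
  -- complex versions
  set cC : ℂ := (ρ : ℂ) + (ρ : ℂ)⁻¹ with hcCdef
  have hcCr : cC = ((ρ + ρ⁻¹ : ℝ) : ℂ) := by push_cast; ring
  have hcC0 : cC ≠ 0 := by
    rw [hcCr]
    exact_mod_cast ne_of_gt (by linarith : (0:ℝ) < ρ + ρ⁻¹)
  have hsC0 : ((s:ℂ)) ≠ 0 := by exact_mod_cast ne_of_gt hs0
  -- membership helper
  have hmemF : ∀ ζ : ℂ, ‖ζ‖ = ρ → (ζ + ζ⁻¹) / cC ∈ F := by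
    intro ζ hζ
    obtain ⟨a, ha1, ha2, hζeq⟩ : ∃ a : ℝ, -Real.pi < a ∧ a ≤ Real.pi ∧
        ζ = (ρ : ℂ) * Complex.exp ((a : ℂ) * Complex.I) := by
      refine ⟨Complex.arg ζ, Complex.neg_pi_lt_arg ζ, Complex.arg_le_pi ζ, ?_⟩
      conv_lhs => rw [← Complex.norm_mul_exp_arg_mul_I ζ]
      rw [hζ]
    subst hζeq
    have key : ∀ θ : ℝ, θ ∈ Set.Icc 0 (2 * Real.pi) →
        Complex.exp (Complex.I * θ) = Complex.exp ((a : ℂ) * Complex.I) →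
        ((ρ : ℂ) * Complex.exp ((a : ℂ) * Complex.I)
          + ((ρ : ℂ) * Complex.exp ((a : ℂ) * Complex.I))⁻¹) / cC ∈ F := by
      intro θ hθ hexp
      rw [hF]
      refine ⟨θ, hθ, ?_⟩
      simp only
      rw [Complex.exp_neg, hexp, mul_inv]
    rcases le_or_gt 0 a with h0 | h0
    · exact key a ⟨h0, by linarith [Real.pi_pos]⟩ (by rw [mul_comm])
    · refine key (a + 2 * Real.pi)
        ⟨by linarith [Real.pi_pos], by linarith⟩ ?_
      push_cast
      rw [mul_comm]
      rw [show ((a : ℂ) + 2 * Real.pi) * Complex.I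
          = (a : ℂ) * Complex.I + 2 * Real.pi * Complex.I by ring]
      rw [Complex.exp_add, Complex.exp_two_pi_mul_I, mul_one]
  constructor
  · -- part (a)
    intro P hdeg hbound
    have hPnd : P.natDegree ≤ n := Polynomial.natDegree_le_iff_degree_le.mpr hdeg
    obtain ⟨g, hgdeg, hgeval⟩ := aux_g P n hPnd cC hcC0
    obtain ⟨h, hhdeg, hheval⟩ := aux_rev g (2 * n) hgdeg ((ρ : ℂ) ^ 2)
    have hne : ∀ ζ : ℂ, ‖ζ‖ = ρ → ζ ≠ 0 := by
      intro ζ hζ h0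
      rw [h0, norm_zero] at hζ
      linarith
    have hgb : ∀ ζ : ℂ, ‖ζ‖ = ρ → ‖g.eval ζ‖ ≤ ρ ^ n := by
      intro ζ hζ
      have hζ0 : ζ ≠ 0 := hne ζ hζ
      rw [hgeval ζ hζ0]
      have hpt : (ζ ^ 2 + 1) / (cC * ζ) = (ζ + ζ⁻¹) / cC := by
        field_simp
      rw [hpt, norm_mul, norm_pow, hζ]
      exact mul_le_of_le_one_right (pow_nonneg hρ0.le n) (hbound _ (hmemF ζ hζ))
    have hhb : ∀ ζ ∈ frontier (Metric.ball (0:ℂ) ρ), ‖h.eval ζ‖ ≤ ρ ^ (2 * n) * ρ ^ n := by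
      intro ζ hζmem
      rw [frontier_ball (0:ℂ) (ne_of_gt hρ0)] at hζmem
      have hζ : ‖ζ‖ = ρ := by
        simpa [Complex.dist_eq] using hζmem
      have hζ0 : ζ ≠ 0 := hne ζ hζ
      rw [hheval ζ hζ0, norm_mul, norm_pow, hζ]
      have habs2 : ‖(ρ:ℂ) ^ 2 / ζ‖ = ρ := by
        rw [norm_div, norm_pow, Complex.norm_real, Real.norm_eq_abs, abs_of_pos hρ0, hζ, sq, mul_div_assoc,
          div_self (ne_of_gt hρ0), mul_one]
      exact mul_le_mul_of_nonneg_left (hgb _ habs2) (pow_nonneg hρ0.le _)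
    have hmax : ‖h.eval ((ρ:ℂ) ^ 2 / (s:ℂ))‖ ≤ ρ ^ (2 * n) * ρ ^ n := by
      have hz : (ρ:ℂ) ^ 2 / (s:ℂ) ∈ closure (Metric.ball (0:ℂ) ρ) := by
        rw [closure_ball (0:ℂ) (ne_of_gt hρ0), Metric.mem_closedBall, Complex.dist_eq, sub_zero]
        have : ‖(ρ:ℂ) ^ 2 / (s:ℂ)‖ = ρ ^ 2 / s := by
          rw [norm_div, norm_pow, Complex.norm_real, Complex.norm_real, Real.norm_eq_abs, Real.norm_eq_abs, abs_of_pos hρ0,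
            abs_of_pos hs0]
        rw [this, div_le_iff₀ hs0]
        nlinarith
      exact Complex.norm_le_of_forall_mem_frontier_norm_le Metric.isBounded_ball
        ((Polynomial.differentiable h).diffContOnCl) hhb hz
    have hz0 : (ρ:ℂ) ^ 2 / (s:ℂ) ≠ 0 := by
      apply div_ne_zero
      · exact pow_ne_zero _ (by exact_mod_cast ne_of_gt hρ0)
      · exact hsC0
    rw [hheval _ hz0] at hmax
    have hss' : (ρ:ℂ) ^ 2 / ((ρ:ℂ) ^ 2 / (s:ℂ)) = (s:ℂ) := by
      rw [div_div_eq_mul_div, mul_comm, mul_div_assoc, div_self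
        (pow_ne_zero _ (by exact_mod_cast ne_of_gt hρ0 : (ρ:ℂ) ≠ 0)), mul_one]
    rw [hss', hgeval (s:ℂ) hsC0] at hmax
    have hγpt : ((s:ℂ) ^ 2 + 1) / (cC * (s:ℂ)) = (γ:ℂ) := by
      have hr : s ^ 2 + 1 = γ * (ρ + ρ⁻¹) * s := by
        have h2 : s ^ 2 + 1 = s * (s + s⁻¹) := by
          rw [mul_add, ← sq, hss]
        rw [h2, hγs]
        ring
      rw [hcCr, show ((s:ℂ) ^ 2 + 1) = ((s ^ 2 + 1 : ℝ) : ℂ) by push_cast; ring, hr]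
      have hne2 : ((ρ + ρ⁻¹ : ℝ) : ℂ) * (s:ℂ) ≠ 0 := mul_ne_zero (hcCr ▸ hcC0) hsC0
      rw [Complex.ofReal_mul, Complex.ofReal_mul, mul_assoc, mul_div_assoc, div_self hne2,
        mul_one]
    rw [hγpt] at hmax
    have habsval : ‖((ρ:ℂ) ^ 2 / (s:ℂ)) ^ (2 * n) * ((s:ℂ) ^ n * P.eval (γ:ℂ))‖
        = (ρ ^ 2 / s) ^ (2 * n) * (s ^ n * ‖P.eval (γ:ℂ)‖) := by
      rw [norm_mul, norm_mul, norm_pow, norm_pow, norm_div, norm_pow, Complex.norm_real,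
        Complex.norm_real, Real.norm_eq_abs, Real.norm_eq_abs, abs_of_pos hρ0, abs_of_pos hs0]
    rw [habsval] at hmax
    set A := ‖P.eval (γ:ℂ)‖ with hAdef
    have hA0 : 0 ≤ A := norm_nonneg _
    have hρn : (0:ℝ) < ρ ^ n := pow_pos hρ0 n
    have hsn : (0:ℝ) < s ^ n := pow_pos hs0 n
    rw [le_div_iff₀ hρn]
    have e1 : (ρ ^ 2 / s) ^ (2 * n) * (s ^ n * A) * s ^ n = ρ ^ (4 * n) * A := by
      field_simp
      rw [div_pow, ← pow_mul, ← pow_mul, div_mul_eq_mul_div, div_mul_eq_mul_div,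
        div_eq_iff (by positivity)]
      ring
    have e2 : ρ ^ (4 * n) * A ≤ ρ ^ (2 * n) * ρ ^ n * s ^ n := by
      rw [← e1]
      exact mul_le_mul_of_nonneg_right hmax hsn.le
    have h5 : ρ ^ (3 * n) * (A * ρ ^ n) ≤ ρ ^ (3 * n) * s ^ n := by
      calc ρ ^ (3 * n) * (A * ρ ^ n) = ρ ^ (4 * n) * A := by ring
        _ ≤ ρ ^ (2 * n) * ρ ^ n * s ^ n := e2
        _ = ρ ^ (3 * n) * s ^ n := by ring
    exact le_of_mul_le_mul_left h5 (pow_pos hρ0 (3 * n))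
  · -- part (b)
    set r : ℝ := ρ ^ n + (ρ⁻¹) ^ n with hrdef
    have hr0 : (0:ℝ) < r := by positivity
    have hPe : ∀ u : ℂ, u ≠ 0 →
        Polynomial.eval ((u + u⁻¹) / cC) (Polynomial.C ((2 / r : ℝ) : ℂ) *
          ((Polynomial.Chebyshev.T ℂ n).comp (Polynomial.C (cC / 2) * Polynomial.X)))
        = ((2 / r : ℝ) : ℂ) * ((u ^ n + u⁻¹ ^ n) / 2) := by
      intro u hu
      rw [Polynomial.eval_mul, Polynomial.eval_C, Polynomial.eval_comp, Polynomial.eval_mul,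
        Polynomial.eval_C, Polynomial.eval_X]
      congr 1
      rw [show cC / 2 * ((u + u⁻¹) / cC) = (u + u⁻¹) / 2 by
        field_simp]
      exact aux_chebEval n u hu
    refine ⟨Polynomial.C ((2 / r : ℝ) : ℂ) *
      ((Polynomial.Chebyshev.T ℂ n).comp (Polynomial.C (cC / 2) * Polynomial.X)), ?_, ?_, ?_⟩
    · apply Polynomial.natDegree_le_iff_degree_le.mp
      refine (Polynomial.natDegree_mul_le).trans ?_
      rw [Polynomial.natDegree_C, zero_add]
      refine (Polynomial.natDegree_comp_le).trans ?_
      have h1 : (Polynomial.C (cC / 2) * Polynomial.X).natDegree ≤ 1 := by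
        refine (Polynomial.natDegree_mul_le).trans ?_
        simp
      calc _ ≤ n * 1 := Nat.mul_le_mul (aux_degT n) h1
        _ = n := by omega
    · intro z hz
      rw [hF] at hz
      obtain ⟨θ, hθ, rfl⟩ := hz
      simp only
      set u : ℂ := (ρ : ℂ) * Complex.exp (Complex.I * θ) with hu
      have hρC0 : (ρ:ℂ) ≠ 0 := by exact_mod_cast ne_of_gt hρ0
      have hu0 : u ≠ 0 := mul_ne_zero hρC0 (Complex.exp_ne_zero _)
      have huinv : u⁻¹ = (ρ:ℂ)⁻¹ * Complex.exp (-(Complex.I * θ)) := by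
        rw [hu, mul_inv, Complex.exp_neg]
      have hzeq : ((ρ:ℂ) * Complex.exp (Complex.I * θ)
          + (ρ:ℂ)⁻¹ * Complex.exp (-(Complex.I * θ))) / cC = (u + u⁻¹) / cC := by
        rw [huinv]
      rw [hzeq, hPe u hu0]
      have habsu : ‖u‖ = ρ := by
        rw [hu, norm_mul, Complex.norm_real, Real.norm_eq_abs, abs_of_pos hρ0,
          show Complex.I * (θ:ℂ) = (θ:ℂ) * Complex.I by ring,
          Complex.norm_exp_ofReal_mul_I, mul_one]
      have habsui : ‖u⁻¹‖ = ρ⁻¹ := by rw [norm_inv, habsu]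
      have htri : ‖u ^ n + u⁻¹ ^ n‖ ≤ r := by
        refine (norm_add_le _ _).trans ?_
        rw [norm_pow, norm_pow, habsu, habsui]
      calc ‖((2 / r : ℝ) : ℂ) * ((u ^ n + u⁻¹ ^ n) / 2)‖
          = (2 / r) * (‖u ^ n + u⁻¹ ^ n‖ / 2) := by
            rw [norm_mul, norm_div, Complex.norm_real, Real.norm_eq_abs, abs_of_pos (by positivity : (0:ℝ) < 2 / r),
              Complex.norm_two]
        _ ≤ (2 / r) * (r / 2) := by gcongr
        _ = 1 := by field_simp
    · have hγeq : (γ:ℂ) = ((s:ℂ) + (s:ℂ)⁻¹) / cC := by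
        have hgr : γ = (s + s⁻¹) / (ρ + ρ⁻¹) := by
          rw [← hγs, mul_div_assoc, div_self (by linarith : (ρ + ρ⁻¹ : ℝ) ≠ 0), mul_one]
        rw [hcCr, hgr]
        push_cast
        ring
      rw [hγeq, hPe (s:ℂ) hsC0]
      have hval : ((2 / r : ℝ) : ℂ) * (((s:ℂ) ^ n + ((s:ℂ))⁻¹ ^ n) / 2)
          = (((s ^ n + (s⁻¹) ^ n) / r : ℝ) : ℂ) := by
        push_cast
        ring
      rw [hval, Complex.norm_real, Real.norm_eq_abs, abs_of_pos (by positivity)]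
      apply le_of_eq
      rw [hrdef]
      rw [zpow_natCast, zpow_natCast, zpow_neg, zpow_neg, zpow_natCast, zpow_natCast,
        ← inv_pow, ← inv_pow]
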